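/- Let M be a real square matrix all of whose eigenvalues have positive real part, and let b be a compatible vector. Then there exists α > 0 such that the Richardson iteration θ_{t+1} = θ_t + α(b − M θ_t) converges to M⁻¹ b from any initial point θ_1. -/

import Mathlib

open Filter Matrix

attribute [local instance] Matrix.linftyOpNormedAddCommGroup Matrix.linftyOpNormedRing
  Matrix.linftyOpNormedAlgebra

/-- In a complex Banach algebra, if the spectral radius is `< 1` then powers tend to zero. -/
lemma aux_pow_tendsto_zero {A : Type*} [NormedRing A] [NormedAlgebra ℂ A] [CompleteSpace A]
    (a : A) (h : spectralRadius ℂ a < 1) :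
    Tendsto (fun k : ℕ => a ^ k) atTop (nhds 0) := by
  obtain ⟨r, hr1, hr2⟩ := ENNReal.lt_iff_exists_nnreal_btwn.mp h
  have hG := spectrum.pow_nnnorm_pow_one_div_tendsto_nhds_spectralRadius a
  have hev : ∀ᶠ k : ℕ in atTop, (‖a ^ k‖₊ : ENNReal) ^ (1 / (k : ℝ)) < (r : ENNReal) :=
    hG.eventually_lt_const hr1
  have hrc : (r : ℝ) < 1 := by exact_mod_cast hr2
  refine squeeze_zero_norm' ?_ (tendsto_pow_atTop_nhds_zero_of_lt_one r.coe_nonneg hrc)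
  filter_upwards [hev, eventually_ge_atTop 1] with k hk hk1
  have hkne : (k : ℝ) ≠ 0 := Nat.cast_ne_zero.mpr (by omega)
  have h2 : ((‖a ^ k‖₊ : ENNReal) ^ (1 / (k : ℝ))) ^ (k : ℝ) < (r : ENNReal) ^ (k : ℝ) :=
    ENNReal.rpow_lt_rpow hk (Nat.cast_pos.mpr (by omega))
  rw [← ENNReal.rpow_mul, one_div, inv_mul_cancel₀ hkne, ENNReal.rpow_one,
    ENNReal.rpow_natCast] at h2
  have h4 : ‖a ^ k‖₊ < r ^ k := by exact_mod_cast h2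
  exact le_of_lt (by exact_mod_cast h4)

/-- Richardson iteration converges to `M⁻¹ b` for some step size `α > 0`
when all (complex) eigenvalues of `M` have positive real part. -/
theorem stmt0 {n : ℕ} (M : Matrix (Fin n) (Fin n) ℝ)
    (hM : ∀ μ ∈ spectrum ℂ (M.map (Complex.ofReal)), 0 < μ.re)
    (b : Fin n → ℝ) :
    ∃ α : ℝ, 0 < α ∧ ∀ θ : ℕ → (Fin n → ℝ),
      (∀ t, θ (t + 1) = θ t + α • (b - M.mulVec (θ t))) →
      Filter.Tendsto θ Filter.atTop (nhds (M⁻¹.mulVec b)) := by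
  rcases Nat.eq_zero_or_pos n with hn | hn
  · subst hn
    refine ⟨1, one_pos, fun θ _ => ?_⟩
    have hθ : θ = fun _ => M⁻¹.mulVec b := funext fun t => Subsingleton.elim _ _
    rw [hθ]; exact tendsto_const_nhds
  have : NeZero n := ⟨hn.ne'⟩
  set Mc := M.map Complex.ofReal with hMcdef
  -- M is invertible
  have hdet : IsUnit M.det := by
    have h0 : (0 : ℂ) ∉ spectrum ℂ Mc := fun h => lt_irrefl (0:ℝ) (by simpa using hM 0 h)
    have hu : IsUnit Mc := (spectrum.zero_notMem_iff ℂ).mp h0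
    rw [Matrix.isUnit_iff_isUnit_det] at hu
    have hd : ((M.det : ℝ) : ℂ) = Mc.det := by
      rw [hMcdef]
      exact RingHom.map_det Complex.ofRealHom M
    rw [← hd] at hu
    rw [isUnit_iff_ne_zero]
    intro hz
    rw [hz] at hu
    simp at hu
  -- choose α
  have hfin := Matrix.finite_spectrum (R := ℂ) Mc
  have hne : (spectrum ℂ Mc).Nonempty := spectrum.nonempty Mc
  have hSne : hfin.toFinset.Nonempty := by
    rwa [Set.Finite.toFinset_nonempty]
  set f : ℂ → ℝ := fun μ => μ.re / Complex.normSq μ with hf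
  set α := hfin.toFinset.inf' hSne f with hα
  have hmem : ∀ μ ∈ hfin.toFinset, 0 < μ.re ∧ 0 < Complex.normSq μ := by
    intro μ hμ
    rw [Set.Finite.mem_toFinset] at hμ
    have h1 := hM μ hμ
    exact ⟨h1, Complex.normSq_pos.mpr (fun h => by simp [h] at h1)⟩
  have hαpos : 0 < α := by
    rw [hα, Finset.lt_inf'_iff]
    intro μ hμ
    obtain ⟨h1, h2⟩ := hmem μ hμ
    exact div_pos h1 h2
  have hαle : ∀ μ ∈ spectrum ℂ Mc, α * Complex.normSq μ ≤ μ.re := by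
    intro μ hμ
    have hμ' : μ ∈ hfin.toFinset := (Set.Finite.mem_toFinset _).mpr hμ
    obtain ⟨h1, h2⟩ := hmem μ hμ'
    have := Finset.inf'_le f hμ'
    rw [← hα, hf] at this
    calc α * Complex.normSq μ ≤ (μ.re / Complex.normSq μ) * Complex.normSq μ := by
          exact mul_le_mul_of_nonneg_right this h2.le
      _ = μ.re := div_mul_cancel₀ _ h2.ne'
  refine ⟨α, hαpos, fun θ hθ => ?_⟩
  set x := M⁻¹.mulVec b with hx
  set B : Matrix (Fin n) (Fin n) ℝ := 1 - α • M with hB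
  have hMx : M.mulVec x = b := by
    rw [hx, Matrix.mulVec_mulVec, Matrix.mul_nonsing_inv M hdet, Matrix.one_mulVec]
  -- recurrence
  have hrec : ∀ t, θ t - x = (B ^ t).mulVec (θ 0 - x) := by
    intro t
    induction t with
    | zero => simp
    | succ t ih =>
      rw [hθ t, pow_succ', ← Matrix.mulVec_mulVec, ← ih]
      rw [hB, Matrix.sub_mulVec, Matrix.one_mulVec, Matrix.smul_mulVec,
        Matrix.mulVec_sub, hMx]
      ext i
      simp only [Pi.add_apply, Pi.sub_apply, Pi.smul_apply, smul_eq_mul]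
      ring
  -- complex matrix
  set Bc : Matrix (Fin n) (Fin n) ℂ := B.map Complex.ofReal with hBc
  have hBceq : Bc = 1 - (α : ℂ) • Mc := by
    ext i j
    rw [hBc, hMcdef, hB]
    by_cases h : i = j <;>
      simp [Matrix.map_apply, Matrix.one_apply, Matrix.sub_apply, Matrix.smul_apply, h,
        Complex.real_smul]
  -- spectrum of Bc
  have hspecBc : ∀ z ∈ spectrum ℂ Bc, ‖z‖₊ < 1 := by
    intro z hz
    rw [hBceq] at hz
    have h1 : (1 : Matrix (Fin n) (Fin n) ℂ) = algebraMap ℂ _ (1 : ℂ) := by simp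
    rw [h1, ← spectrum.singleton_sub_eq,
      spectrum.smul_eq_smul (α : ℂ) Mc hne] at hz
    obtain ⟨u, hu, v, hv, huv⟩ := Set.mem_sub.mp hz
    obtain ⟨μ, hμ, hμv⟩ := hv
    rw [Set.mem_singleton_iff] at hu
    subst hu
    have hre := hM μ hμ
    have hle := hαle μ hμ
    have hzz : z = 1 - (α : ℂ) * μ := by rw [← huv, ← hμv]; rfl
    have hns : Complex.normSq z < 1 := by
      rw [hzz]
      rw [Complex.normSq_apply]
      simp only [Complex.sub_re, Complex.sub_im, Complex.one_re, Complex.one_im,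
        Complex.mul_re, Complex.mul_im, Complex.ofReal_re, Complex.ofReal_im]
      have hnsq : Complex.normSq μ = μ.re * μ.re + μ.im * μ.im := Complex.normSq_apply μ
      rw [hnsq] at hle
      nlinarith [mul_le_mul_of_nonneg_left hle hαpos.le, hαpos, hre,
        mul_pos hαpos hre]
    have habs : ‖z‖ < 1 := by
      have h2 : ‖z‖ ^ 2 = Complex.normSq z := Complex.sq_norm z
      nlinarith [norm_nonneg z]
    rw [← NNReal.coe_lt_coe]
    exact habs
  have hρ : spectralRadius ℂ Bc < 1 := by
    have := spectrum.spectralRadius_lt_of_forall_lt Bc hspecBc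
    simpa using this
  have hpow := aux_pow_tendsto_zero Bc hρ
  -- transfer to ℝ
  set e0 := θ 0 - x with he0
  set ec : Fin n → ℂ := fun i => (e0 i : ℂ) with hec
  have hmapcomm : ∀ k : ℕ, (Bc ^ k).mulVec ec = fun i => (((B ^ k).mulVec e0 i : ℝ) : ℂ) := by
    intro k
    have hk : Bc ^ k = (B ^ k).map Complex.ofReal := by
      rw [hBc]
      exact (RingHom.map_pow (Complex.ofRealHom.mapMatrix) B k).symm
    rw [hk]
    ext i
    simp [Matrix.mulVec, dotProduct, Matrix.map_apply, hec]
  have hnorm_eq : ∀ k : ℕ, ‖(B ^ k).mulVec e0‖ = ‖(Bc ^ k).mulVec ec‖ := by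
    intro k
    rw [hmapcomm k]
    simp [Pi.norm_def, Pi.nnnorm_def, Complex.nnnorm_real]
  have htend0 : Tendsto (fun k : ℕ => (B ^ k).mulVec e0) atTop (nhds 0) := by
    have hlim : Tendsto (fun k : ℕ => ‖Bc ^ k‖ * ‖ec‖) atTop (nhds 0) := by
      have h := (hpow.norm).mul_const ‖ec‖
      simpa using h
    refine squeeze_zero_norm' ?_ hlim
    filter_upwards with k
    rw [hnorm_eq k]
    exact Matrix.linfty_opNorm_mulVec _ _
  have hθeq : θ = fun t => x + (B ^ t).mulVec e0 := by
    funext t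
    have := hrec t
    rw [← this]
    abel
  rw [hθeq]
  have := tendsto_const_nhds (x := x) (f := atTop (α := ℕ)) |>.add htend0
  simpa using this
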